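/- Let α > 0, q₀ > 0, c₀ ≠ 0, and e₀ ∈ ℝ. Then the function F(q) = ( [ 4(c₀² + e₀²) - 4 e₀² (1 - e^{-q/α}) ] · (1 - e^{-q/α}) )^{-1/2} is integrable on the interval (0, q₀]; that is, the improper integral ∫₀^{q₀} F(q) dq is finite. -/

import Mathlib

open MeasureTheory Set

/-- Finite collision time for an antisymmetric head-on collision of two MCH2 peakons
with Helmholtz kernel `K(q) = e^{-q/α}`: the quadrature integrand
`1/√([4(c₀² + e₀²) - 4e₀²(1 - K(q))](1 - K(q)))` is integrable near `q = 0`. -/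
theorem headon_collision_time_finite
    (α q₀ c₀ e₀ : ℝ) (hα : 0 < α) (hq₀ : 0 < q₀) (hc₀ : c₀ ≠ 0) :
    IntegrableOn
      (fun q : ℝ =>
        (Real.sqrt ((4*(c₀^2 + e₀^2) - 4*e₀^2*(1 - Real.exp (-q/α)))
            * (1 - Real.exp (-q/α))))⁻¹)
      (Set.Ioc 0 q₀) := by
  set M : ℝ := 4 * c₀ ^ 2 * Real.exp (-q₀ / α) / α with hMdef
  have hM : 0 < M := by positivity
  have hbound_int : IntegrableOn (fun q : ℝ => (Real.sqrt M)⁻¹ * q ^ (-(1/2) : ℝ))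
      (Set.Ioc 0 q₀) := by
    have h1 : IntervalIntegrable (fun q : ℝ => q ^ (-(1/2) : ℝ)) volume 0 q₀ :=
      intervalIntegral.intervalIntegrable_rpow' (by norm_num)
    have h2 : IntegrableOn (fun q : ℝ => q ^ (-(1/2) : ℝ)) (Set.Ioc 0 q₀) :=
      (intervalIntegrable_iff_integrableOn_Ioc_of_le hq₀.le).mp h1
    exact h2.const_mul _
  refine Integrable.mono' hbound_int ?_ ?_
  · apply Measurable.aestronglyMeasurable
    apply Measurable.inv
    fun_prop
  · rw [ae_restrict_iff' measurableSet_Ioc]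
    filter_upwards with q hq
    obtain ⟨hq0, hqq₀⟩ := hq
    set K : ℝ := Real.exp (-q / α) with hK
    have hK0 : 0 < K := Real.exp_pos _
    have hxa : 0 < q / α := div_pos hq0 hα
    -- 1 - K ≥ (q/α) * exp(-q/α)
    have hlow : q / α * K ≤ 1 - K := by
      have hKval : K = (Real.exp (q / α))⁻¹ := by
        rw [hK, ← Real.exp_neg]; ring_nf
      have hepos : 0 < Real.exp (q / α) := Real.exp_pos _
      rw [hKval]
      nlinarith [Real.add_one_le_exp (q / α), mul_inv_cancel₀ hepos.ne',
        inv_pos.mpr hepos, hxa]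
    have hKmono : Real.exp (-q₀ / α) ≤ K := by
      apply Real.exp_le_exp.mpr
      gcongr
    -- product lower bound
    have hprod : M * q ≤ (4*(c₀^2 + e₀^2) - 4*e₀^2*(1 - K)) * (1 - K) := by
      have hA : 4 * c₀ ^ 2 ≤ 4*(c₀^2 + e₀^2) - 4*e₀^2*(1 - K) := by nlinarith [sq_nonneg e₀]
      have h1K : M * q / (4 * c₀ ^ 2) ≤ 1 - K := by
        have hc2 : 0 < (4 : ℝ) * c₀ ^ 2 := by positivity
        rw [div_le_iff₀ hc2]
        have : M * q = 4 * c₀ ^ 2 * (q / α * Real.exp (-q₀ / α)) := by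
          rw [hMdef]; field_simp
        rw [this]
        have : q / α * Real.exp (-q₀ / α) ≤ q / α * K :=
          mul_le_mul_of_nonneg_left hKmono hxa.le
        nlinarith
      have h1K0 : 0 < 1 - K := lt_of_lt_of_le (by positivity) h1K
      calc M * q = (4 * c₀ ^ 2) * (M * q / (4 * c₀ ^ 2)) := by
            field_simp
        _ ≤ (4*(c₀^2 + e₀^2) - 4*e₀^2*(1 - K)) * (1 - K) := by
            apply mul_le_mul hA h1K (by positivity) (le_trans (by positivity) hA)
    have hMq : 0 < M * q := by positivity
    have hsq : Real.sqrt (M * q) ≤ Real.sqrt ((4*(c₀^2 + e₀^2) - 4*e₀^2*(1 - K)) * (1 - K)) :=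
      Real.sqrt_le_sqrt hprod
    have hsqpos : 0 < Real.sqrt (M * q) := Real.sqrt_pos.mpr hMq
    have hnorm : ‖(Real.sqrt ((4*(c₀^2 + e₀^2) - 4*e₀^2*(1 - K)) * (1 - K)))⁻¹‖
        = (Real.sqrt ((4*(c₀^2 + e₀^2) - 4*e₀^2*(1 - K)) * (1 - K)))⁻¹ := by
      rw [Real.norm_eq_abs, abs_of_nonneg]
      positivity
    rw [hnorm]
    have hle : (Real.sqrt ((4*(c₀^2 + e₀^2) - 4*e₀^2*(1 - K)) * (1 - K)))⁻¹
        ≤ (Real.sqrt (M * q))⁻¹ :=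
      inv_anti₀ hsqpos hsq
    refine hle.trans_eq ?_
    rw [Real.sqrt_mul hM.le, mul_inv]
    congr 1
    rw [Real.rpow_neg hq0.le]
    congr 1
    rw [Real.sqrt_eq_rpow]
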